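/- The group F₂ × ℤ is not Howson: there exist finitely generated subgroups H1, H2 of F₂ × ℤ whose intersection H1 ∩ H2 is not finitely generated. -/

import Mathlib

open Multiplicative SemidirectProduct

namespace F2ZNH

noncomputable section

abbrev A : Type := ℤ →₀ ℤ

def shift : MulAut (Multiplicative A) :=
  AddEquiv.toMultiplicative (Finsupp.domCongr (Equiv.addRight (1 : ℤ)))

def act : Multiplicative ℤ →* MulAut (Multiplicative A) := zpowersHom _ shift

abbrev W := SemidirectProduct (Multiplicative A) (Multiplicative ℤ) act

def phi : FreeGroup (Fin 2) →* Multiplicative ℤ :=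
  FreeGroup.lift (fun i => if i = 0 then ofAdd 1 else 1)

def rho : FreeGroup (Fin 2) →* W :=
  FreeGroup.lift (fun i => if i = 0 then inr (ofAdd 1) else inl (ofAdd (Finsupp.single 0 1)))

lemma rightHom_rho (w : FreeGroup (Fin 2)) : rightHom (rho w) = phi w := by
  have : (rightHom : W →* Multiplicative ℤ).comp rho = phi := by
    apply FreeGroup.ext_hom
    intro a
    fin_cases a <;> simp [rho, phi]
  exact DFunLike.congr_fun this w

lemma shift_zpow (n : ℤ) (m c : ℤ) :
    (shift ^ n) (ofAdd (Finsupp.single m c)) = ofAdd (Finsupp.single (m + n) c) := by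
  have key : ∀ m : ℤ, shift (ofAdd (Finsupp.single m c)) = ofAdd (Finsupp.single (m + 1) c) := by
    intro m
    show ofAdd (Finsupp.equivMapDomain (Equiv.addRight (1:ℤ)) (Finsupp.single m c)) = _
    rw [Finsupp.equivMapDomain_single]
    rfl
  induction n using Int.induction_on generalizing m with
  | zero => simp
  | succ k ih =>
      rw [show ((k:ℤ)+1) = (k+1 : ℤ) from rfl, zpow_add, zpow_one, MulAut.mul_apply, key m,
        ih (m+1)]
      ring_nf
  | pred k ih =>
      have h1 : shift⁻¹ (ofAdd (Finsupp.single m c)) = ofAdd (Finsupp.single (m - 1) c) := by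
        apply shift.injective
        rw [MulAut.apply_inv_self, key, sub_add_cancel]
      rw [show (-(k:ℤ) - 1) = (-(k:ℤ)) + (-1) by ring, zpow_add, zpow_neg_one, MulAut.mul_apply,
        h1, ih (m-1)]
      ring_nf

/-- the element `a^n b^c a^{-n}` -/
def ww (n c : ℤ) : FreeGroup (Fin 2) :=
  FreeGroup.of 0 ^ n * FreeGroup.of 1 ^ c * FreeGroup.of 0 ^ (-n)

lemma phi_ww (n c : ℤ) : phi (ww n c) = 1 := by
  have h0 : phi (FreeGroup.of 0) = ofAdd 1 := by simp [phi]
  have h1 : phi (FreeGroup.of 1) = 1 := by simp [phi]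
  rw [ww, map_mul, map_mul, map_zpow, map_zpow, map_zpow, h0, h1]
  group

lemma rho_ww (n c : ℤ) : rho (ww n c) = inl (ofAdd (Finsupp.single n c)) := by
  have h0 : rho (FreeGroup.of 0) = inr (ofAdd 1) := by simp [rho]
  have h1 : rho (FreeGroup.of 1) = inl (ofAdd (Finsupp.single 0 1)) := by simp [rho]
  have e0 : rho (FreeGroup.of 0 ^ n) = inr (ofAdd n) := by
    rw [map_zpow, h0, ← map_zpow, ← ofAdd_zsmul, smul_eq_mul, mul_one]
  have e1 : rho (FreeGroup.of 1 ^ c) = inl (ofAdd (Finsupp.single 0 c)) := by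
    rw [map_zpow, h1, ← map_zpow, ← ofAdd_zsmul, Finsupp.smul_single, smul_eq_mul, mul_one]
  have e2 : rho (FreeGroup.of 0 ^ (-n)) = (inr (ofAdd n) : W)⁻¹ := by
    rw [zpow_neg, map_inv, e0]
  rw [ww, map_mul, map_mul, e0, e1, e2, ← map_inv, ← inl_aut]
  congr 1
  show (shift ^ (ofAdd n).toAdd) _ = _
  rw [toAdd_ofAdd, shift_zpow, zero_add]

def gr : FreeGroup (Fin 2) →* FreeGroup (Fin 2) × Multiplicative ℤ :=
  (MonoidHom.id _).prod phi

instance : Group.FG (FreeGroup (Fin 2)) :=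
  Group.fg_iff.mpr ⟨Set.range FreeGroup.of, FreeGroup.closure_range_of _, Set.finite_range _⟩

def H1 : Subgroup (FreeGroup (Fin 2) × Multiplicative ℤ) := gr.range
def H2 : Subgroup (FreeGroup (Fin 2) × Multiplicative ℤ) := (MonoidHom.inl _ _).range

lemma memK_phi {x : FreeGroup (Fin 2) × Multiplicative ℤ} (hx : x ∈ H1 ⊓ H2) :
    phi x.1 = 1 := by
  obtain ⟨⟨w, hw⟩, ⟨y, hy⟩⟩ := hx
  have h1 : phi x.1 = x.2 := by
    rw [← hw]; rfl
  have h2 : x.2 = 1 := by rw [← hy]; rfl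
  rw [h1, h2]

lemma rho_right {x : FreeGroup (Fin 2) × Multiplicative ℤ} (hx : x ∈ H1 ⊓ H2) :
    (rho x.1).right = 1 := by
  have : rightHom (rho x.1) = 1 := by rw [rightHom_rho, memK_phi hx]
  exact this

def theta : ↥(H1 ⊓ H2) →* Multiplicative A where
  toFun x := (rho x.1.1).left
  map_one' := by
    show (rho (1 : FreeGroup (Fin 2))).left = 1
    rw [map_one]; rfl
  map_mul' x y := by
    show (rho (x.1.1 * y.1.1)).left = _
    rw [map_mul, mul_left, rho_right x.2, map_one, MulAut.one_apply]

lemma ww_memK (n c : ℤ) : (ww n c, (1 : Multiplicative ℤ)) ∈ H1 ⊓ H2 := by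
  constructor
  · exact ⟨ww n c, by simp [gr, MonoidHom.prod_apply, phi_ww]⟩
  · exact ⟨ww n c, rfl⟩

lemma theta_surj : Function.Surjective theta := by
  intro f
  induction f using Finsupp.induction with
  | zero => exact ⟨1, map_one theta⟩
  | single_add a b f _ _ ih =>
      obtain ⟨x, hx⟩ := ih
      refine ⟨⟨(ww a b, 1), ww_memK a b⟩ * x, ?_⟩
      rw [map_mul, hx]
      have : theta ⟨(ww a b, 1), ww_memK a b⟩ = ofAdd (Finsupp.single a b) := by
        show (rho (ww a b)).left = _
        rw [rho_ww, left_inl]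
      rw [this]; rfl

lemma A_not_fg : ¬ AddGroup.FG A := by
  intro h
  obtain ⟨S, hS⟩ := (AddGroup.fg_def).mp h
  obtain ⟨N, hN⟩ := Infinite.exists_notMem_finset (S.biUnion Finsupp.support)
  have hker : (⊤ : AddSubgroup A) ≤ (Finsupp.applyAddHom (M := ℤ) N).ker := by
    rw [← hS]
    rw [AddSubgroup.closure_le]
    intro s hs
    have : N ∉ s.support := fun hcon => hN (Finset.mem_biUnion.mpr ⟨s, hs, hcon⟩)
    simpa [AddMonoidHom.mem_ker] using Finsupp.notMem_support_iff.mp this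
  have := hker (AddSubgroup.mem_top (Finsupp.single N 1))
  rw [AddMonoidHom.mem_ker] at this
  simp [Finsupp.applyAddHom] at this

end

end F2ZNH

/-- `F₂ × ℤ` is not Howson: there are finitely generated subgroups
`H1, H2 ≤ F₂ × ℤ` whose intersection is not finitely generated. -/
theorem F2_times_Z_not_howson :
    ∃ H1 H2 : Subgroup (FreeGroup (Fin 2) × Multiplicative ℤ),
      H1.FG ∧ H2.FG ∧ ¬ (H1 ⊓ H2).FG := by
  refine ⟨F2ZNH.H1, F2ZNH.H2, ?_, ?_, ?_⟩
  · exact (Group.fg_iff_subgroup_fg F2ZNH.H1).mp (Group.fg_range F2ZNH.gr)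
  · exact (Group.fg_iff_subgroup_fg F2ZNH.H2).mp
      (Group.fg_range (MonoidHom.inl (FreeGroup (Fin 2)) (Multiplicative ℤ)))
  · intro h
    have hK : Group.FG ↥(F2ZNH.H1 ⊓ F2ZNH.H2) := (Group.fg_iff_subgroup_fg _).mpr h
    have : Group.FG (Multiplicative F2ZNH.A) :=
      @Group.fg_of_surjective _ _ _ _ hK F2ZNH.theta F2ZNH.theta_surj
    exact F2ZNH.A_not_fg (AddGroup.fg_iff_mul_fg.mpr this)
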